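/- If X is a clan of a matrix M, then reversing the clan (replacing m_{ij} by m_{ji} for all i,j ∈ X) preserves all principal minors: for every subset S of indices, det(Inv(M,X)[S]) = det(M[S]). -/
import Mathlib


def IsClan {m : Type*} (M : Matrix m m ℝ) (X : Set m) : Prop :=
  ∀ i ∈ X, ∀ j ∈ X, ∀ k ∉ X, M i k = M j k ∧ M k i = M k j

open Classical in
/-- Clan reversal: replace `M i j` by `M j i` for `i, j ∈ X`. -/
noncomputable def ClanInv {n : ℕ} (M : Matrix (Fin n) (Fin n) ℝ) (X : Set (Fin n)) :
    Matrix (Fin n) (Fin n) ℝ :=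
  fun i j => if i ∈ X ∧ j ∈ X then M j i else M i j

open Matrix Polynomial in
lemma clan_aux_inv {p q : Type*} [Fintype p] [Fintype q] [DecidableEq p] [DecidableEq q]
    (A : Matrix p p ℝ) (B : Matrix p q ℝ) (C : Matrix q p ℝ) (D : Matrix q q ℝ)
    (hB : ∀ i i' j, B i j = B i' j) (hC : ∀ i j j', C i j = C i j')
    [Invertible A] :
    (Matrix.fromBlocks Aᵀ B C D).det = (Matrix.fromBlocks A B C D).det := by
  haveI : Invertible Aᵀ := (Matrix.transposeInvertibleEquivInvertible A).symm ‹_›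
  have key : C * ⅟Aᵀ * B = C * ⅟A * B := by
    rw [← Matrix.transpose_invOf]
    ext i j
    simp only [Matrix.mul_apply, Matrix.transpose_apply, Finset.sum_mul]
    rw [Finset.sum_comm]
    refine Finset.sum_congr rfl fun k _ => Finset.sum_congr rfl fun l _ => ?_
    rw [hC i l k, hB l k j]
  rw [Matrix.det_fromBlocks₁₁, Matrix.det_fromBlocks₁₁, Matrix.det_transpose, key]

open Matrix Polynomial in
lemma clan_aux {p q : Type*} [Fintype p] [Fintype q] [DecidableEq p] [DecidableEq q]
    (A : Matrix p p ℝ) (B : Matrix p q ℝ) (C : Matrix q p ℝ) (D : Matrix q q ℝ)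
    (hB : ∀ i i' j, B i j = B i' j) (hC : ∀ i j j', C i j = C i j') :
    (Matrix.fromBlocks Aᵀ B C D).det = (Matrix.fromBlocks A B C D).det := by
  have hfin : {ε : ℝ | (A + ε • 1).det = 0}.Finite := by
    have h : ∀ ε : ℝ, Polynomial.eval ε ((-A).charpoly) = (A + ε • 1).det := by
      intro ε
      rw [Matrix.charpoly, ← Polynomial.coe_evalRingHom, RingHom.map_det]
      congr 1
      ext i j
      by_cases hij : i = j <;>
        simp [hij, Matrix.charmatrix_apply, Matrix.one_apply, Matrix.diagonal_apply, add_comm]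
    apply Set.Finite.subset (Polynomial.finite_setOf_isRoot ((-A).charpoly_monic.ne_zero))
    intro ε hε
    simp only [Set.mem_setOf_eq] at hε ⊢
    rw [Polynomial.IsRoot, h, hε]
  have hdense : Dense {ε : ℝ | (A + ε • 1).det = 0}ᶜ := hfin.countable.dense_compl ℝ
  have hc : Continuous fun ε : ℝ => A + ε • (1 : Matrix p p ℝ) :=
    continuous_const.add (continuous_id.smul continuous_const)
  have hf : Continuous fun ε : ℝ => (Matrix.fromBlocks (A + ε • 1)ᵀ B C D).det :=
    Continuous.matrix_det (Continuous.matrix_fromBlocks hc.matrix_transpose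
      continuous_const continuous_const continuous_const)
  have hg : Continuous fun ε : ℝ => (Matrix.fromBlocks (A + ε • 1) B C D).det :=
    Continuous.matrix_det (Continuous.matrix_fromBlocks hc
      continuous_const continuous_const continuous_const)
  have heq := Continuous.ext_on hdense hf hg (fun ε hε => by
    haveI : Invertible (A + ε • 1) :=
      (A + ε • 1).invertibleOfIsUnitDet (Ne.isUnit hε)
    exact clan_aux_inv _ B C D hB hC)
  have h0 := congrFun heq 0
  simpa using h0

open Matrix in
theorem stmt7 {n : ℕ} (M : Matrix (Fin n) (Fin n) ℝ) (X : Set (Fin n))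
    (hX : IsClan M X) (S : Finset (Fin n)) :
    ((ClanInv M X).submatrix (fun i : ↥S => (i : Fin n)) (fun i : ↥S => (i : Fin n))).det =
      (M.submatrix (fun i : ↥S => (i : Fin n)) (fun i : ↥S => (i : Fin n))).det := by
  classical
  set f : ↥S → Fin n := fun i => (i : Fin n) with hf
  let P : ↥S → Prop := fun i => (i : Fin n) ∈ X
  let e : {i : ↥S // P i} ⊕ {i : ↥S // ¬ P i} ≃ ↥S := Equiv.sumCompl P
  rw [← Matrix.det_submatrix_equiv_self e, ← Matrix.det_submatrix_equiv_self e]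
  let A : Matrix {i : ↥S // P i} {i : ↥S // P i} ℝ := fun i j => M i.1 j.1
  let B : Matrix {i : ↥S // P i} {i : ↥S // ¬ P i} ℝ := fun i j => M i.1 j.1
  let C : Matrix {i : ↥S // ¬ P i} {i : ↥S // P i} ℝ := fun i j => M i.1 j.1
  let D : Matrix {i : ↥S // ¬ P i} {i : ↥S // ¬ P i} ℝ := fun i j => M i.1 j.1
  have h1 : (((ClanInv M X).submatrix f f).submatrix e e) = Matrix.fromBlocks Aᵀ B C D := by
    ext i j
    rcases i with i | i <;> rcases j with j | j <;>
      simp only [Matrix.submatrix_apply, Matrix.fromBlocks_apply₁₁, Matrix.fromBlocks_apply₁₂,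
        Matrix.fromBlocks_apply₂₁, Matrix.fromBlocks_apply₂₂, Matrix.transpose_apply,
        Equiv.sumCompl_apply_inl, Equiv.sumCompl_apply_inr, e, A, B, C, D, f, ClanInv]
    · exact if_pos ⟨i.2, j.2⟩
    · exact if_neg (fun h => j.2 h.2)
    · exact if_neg (fun h => i.2 h.1)
    · exact if_neg (fun h => i.2 h.1)
  have h2 : ((M.submatrix f f).submatrix e e) = Matrix.fromBlocks A B C D := by
    ext i j
    cases i <;> cases j <;> rfl
  rw [h1, h2]
  exact clan_aux A B C D
    (fun i i' j => (hX i.1.1 i.2 i'.1.1 i'.2 j.1.1 j.2).1)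
    (fun i j j' => (hX j.1.1 j.2 j'.1.1 j'.2 i.1.1 i.2).2)
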